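/- Let F be a k-graph, e ∈ E(F), F⁻ = F − e, and let G be the k-graph of chosen new edges {e_i : i ∈ [τ]} of an F-process on n vertices with running time τ, where F has at least three edges. Suppose for every copy D of F⁻ in G a k-set e_D is fixed such that D ∪ e_D is a copy of F. For each copy D, let i(D) = max{i : e_i ∈ E(D)} and j(D) = max{j : e_j ∈ E(D)\{e_{i(D)}}}, and let 𝔰(e_D) denote the step at which e_D is added to the process (0 if e_D ∈ E(H₀)). If j(D) < 𝔰(e_D) < i(D), then 𝔰(e_D) = i(D) − 1. -/

import Mathlib

open Finset Set Filter

/-- Adding the `k`-set `e` to the hypergraph with edge set `H` creates a new copy of the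
hypergraph with edge set `Fe`, i.e. a copy containing `e` as an edge. -/
def CreatesCopy {ι V : Type*} (Fe : Set (Finset ι)) (H : Set (Finset V)) (e : Finset V) : Prop :=
  ∃ f : ι ↪ V, (∀ s ∈ Fe, s.map f ∈ H ∪ {e}) ∧ ∃ s ∈ Fe, s.map f = e

/-- One step of the `F`-bootstrap percolation process for `k`-graphs. -/
def bootStep {ι V : Type*} (k : ℕ) (Fe : Set (Finset ι)) (H : Set (Finset V)) :
    Set (Finset V) :=
  H ∪ {e | e.card = k ∧ CreatesCopy Fe H e}

/-- The `F`-bootstrap percolation process starting with `H0`. -/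
def procSeq {ι V : Type*} (k : ℕ) (Fe : Set (Finset ι)) (H0 : Set (Finset V)) :
    ℕ → Set (Finset V)
  | 0 => H0
  | i + 1 => bootStep k Fe (procSeq k Fe H0 i)

/-- The running time of the `F`-bootstrap percolation process starting with `H0`. -/
noncomputable def runTime {ι V : Type*} (k : ℕ) (Fe : Set (Finset ι))
    (H0 : Set (Finset V)) : ℕ :=
  sInf {i | procSeq k Fe H0 i = procSeq k Fe H0 (i + 1)}

/-- The maximum running time over all `k`-uniform starting hypergraphs on `n` vertices. -/
noncomputable def maxRunTime {ι : Type*} (k : ℕ) (Fe : Set (Finset ι)) (n : ℕ) : ℕ :=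
  sSup {t | ∃ H0 : Set (Finset (Fin n)), (∀ e ∈ H0, e.card = k) ∧ t = runTime k Fe H0}

/-- `H` contains a copy of the hypergraph with edge set `Fe`. -/
def ContainsCopy {ι V : Type*} (Fe : Set (Finset ι)) (H : Set (Finset V)) : Prop :=
  ∃ f : ι ↪ V, ∀ s ∈ Fe, s.map f ∈ H

/-- The Turán extremal number `ex(n, F)` for `k`-graphs. -/
noncomputable def exNum {ι : Type*} (k : ℕ) (Fe : Set (Finset ι)) (n : ℕ) : ℕ :=
  sSup {m | ∃ H : Set (Finset (Fin n)),
    (∀ e ∈ H, e.card = k) ∧ ¬ ContainsCopy Fe H ∧ m = H.ncard}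

/-- The Turán density `π(F)`. -/
noncomputable def turanDensity {ι : Type*} (k : ℕ) (Fe : Set (Finset ι)) : ℝ :=
  limUnder atTop (fun n : ℕ => (exNum k Fe n : ℝ) / (n.choose k : ℝ))

/-- The copies of `F` in `H`, as subhypergraphs: pairs of a vertex set and an edge set. -/
def copies {ι V : Type*} [Fintype ι] (Fe : Set (Finset ι)) (H : Set (Finset V)) :
    Set (Finset V × Set (Finset V)) :=
  {p | ∃ f : ι ↪ V, p.1 = Finset.univ.map f ∧ p.2 = (fun s => s.map f) '' Fe ∧
    ∀ s ∈ Fe, s.map f ∈ H}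

/-- The step of the process at which the edge `e` is added (`0` if `e ∈ H0`). -/
noncomputable def stepOf {ι V : Type*} (k : ℕ) (Fe : Set (Finset ι)) (H0 : Set (Finset V))
    (e : Finset V) : ℕ :=
  sInf {s | e ∈ procSeq k Fe H0 s}

/-- `i(D)`: the largest step index whose chosen edge belongs to the edge set `Ed`. -/
noncomputable def idxMax {V : Type*} (e : ℕ → Finset V) (τ : ℕ) (Ed : Set (Finset V)) : ℕ :=
  sSup {i | i ∈ Set.Icc 1 τ ∧ e i ∈ Ed}

/-- `j(D)`: the largest step index whose chosen edge belongs to `Ed` minus `e_{i(D)}`. -/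
noncomputable def idxSnd {V : Type*} (e : ℕ → Finset V) (τ : ℕ) (Ed : Set (Finset V)) : ℕ :=
  sSup {j | j ∈ Set.Icc 1 τ ∧ e j ∈ Ed \ {e (idxMax e τ Ed)}}

/-- The type (1–4) of a copy `D` with completing edge `eD`, as in the paper. -/
def copyType {ι V : Type*} (k : ℕ) (Fe : Set (Finset ι)) (H0 : Set (Finset V))
    (e : ℕ → Finset V) (τ : ℕ) (eD : Finset V) (Ed : Set (Finset V)) (α : ℕ) : Prop :=
  (α = 1 ∧ stepOf k Fe H0 eD ≤ idxSnd e τ Ed) ∨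
  (α = 2 ∧ idxSnd e τ Ed < stepOf k Fe H0 eD ∧ stepOf k Fe H0 eD < idxMax e τ Ed) ∨
  (α = 3 ∧ idxMax e τ Ed < stepOf k Fe H0 eD) ∨
  (α = 4 ∧ stepOf k Fe H0 eD = idxMax e τ Ed)


lemma procSeq_mono {ι V : Type*} (k : ℕ) (Fe : Set (Finset ι)) (H0 : Set (Finset V))
    {a b : ℕ} (hab : a ≤ b) : procSeq k Fe H0 a ⊆ procSeq k Fe H0 b := by
  induction b with
  | zero =>
    have : a = 0 := Nat.le_zero.mp hab
    subst this; exact Set.Subset.rfl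
  | succ b ih =>
    rcases Nat.lt_or_ge a (b + 1) with h | h
    · exact (ih (Nat.lt_succ_iff.mp h)).trans Set.subset_union_left
    · have : a = b + 1 := le_antisymm hab h
      subst this; exact Set.Subset.rfl

/-- Type 2 copies: if for a copy `D` of `F⁻ = F − e₀` in `G` (given by an embedding `f`)
the completing `k`-set `e_D` satisfies `j(D) < 𝔰(e_D) < i(D)`, then `𝔰(e_D) = i(D) − 1`. -/
theorem stepOf_eq_idxMax_sub_one (k : ℕ) {ι : Type*} [Fintype ι] (Fe : Set (Finset ι))
    (hFe : ∀ s ∈ Fe, s.card = k) (hcard : 3 ≤ Fe.ncard) (e₀ : Finset ι) (he₀ : e₀ ∈ Fe)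
    {n : ℕ} (H0 : Set (Finset (Fin n))) (hH0 : ∀ s ∈ H0, s.card = k)
    (e : ℕ → Finset (Fin n)) (τ : ℕ) (hτ : τ = runTime k Fe H0)
    (he : ∀ i : ℕ, 1 ≤ i → i ≤ τ →
      e i ∈ procSeq k Fe H0 i \ procSeq k Fe H0 (i - 1))
    (f : ι ↪ Fin n) (hf : ∀ s ∈ Fe \ {e₀}, s.map f ∈ e '' Set.Icc 1 τ)
    (eD : Finset (Fin n))
    (heD : ∃ g : ι ↪ Fin n,
      (fun s => s.map g) '' Fe = ((fun s => s.map f) '' (Fe \ {e₀})) ∪ {eD})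
    (h1 : idxSnd e τ ((fun s => s.map f) '' (Fe \ {e₀})) < stepOf k Fe H0 eD)
    (h2 : stepOf k Fe H0 eD < idxMax e τ ((fun s => s.map f) '' (Fe \ {e₀}))) :
    stepOf k Fe H0 eD = idxMax e τ ((fun s => s.map f) '' (Fe \ {e₀})) - 1 := by
  classical
  set Ed := ((fun s => s.map f) '' (Fe \ {e₀})) with hEdDef
  set i := idxMax e τ Ed with hiDef
  set j := idxSnd e τ Ed with hjDef
  set s := stepOf k Fe H0 eD with hsDef
  -- the set defining idxMax
  have hne : (Fe \ {e₀}).Nonempty := by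
    rw [Set.nonempty_iff_ne_empty]
    intro h
    have hsub : Fe ⊆ {e₀} := Set.diff_eq_empty.mp h
    have := Set.ncard_le_ncard hsub (Set.finite_singleton _)
    rw [Set.ncard_singleton] at this
    omega
  have hbddI : BddAbove {i | i ∈ Set.Icc 1 τ ∧ e i ∈ Ed} := ⟨τ, fun x hx => hx.1.2⟩
  have hbddJ : BddAbove {m | m ∈ Set.Icc 1 τ ∧ e m ∈ Ed \ {e i}} := ⟨τ, fun x hx => hx.1.2⟩
  have hneI : {i | i ∈ Set.Icc 1 τ ∧ e i ∈ Ed}.Nonempty := by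
    obtain ⟨s', hs'⟩ := hne
    obtain ⟨m, hm, hme⟩ := hf s' hs'
    exact ⟨m, hm, by rw [hme]; exact Set.mem_image_of_mem _ hs'⟩
  have hiS : i ∈ {i | i ∈ Set.Icc 1 τ ∧ e i ∈ Ed} := by
    rw [hiDef]
    exact Nat.sSup_mem hneI hbddI
  obtain ⟨⟨hi1, hiτ⟩, heiEd⟩ := hiS
  -- each edge of Ed other than `e i` is present at step s
  have hEdsub : ∀ f' ∈ Ed, f' ≠ e i → f' ∈ procSeq k Fe H0 s := by
    intro f' hf' hne'
    obtain ⟨s', hs', rfl⟩ := hf'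
    obtain ⟨m, hm, hme⟩ := hf s' hs'
    have hmS : m ∈ {m | m ∈ Set.Icc 1 τ ∧ e m ∈ Ed \ {e i}} := by
      refine ⟨hm, ?_, ?_⟩
      · rw [hme]; exact Set.mem_image_of_mem _ hs'
      · simp only [Set.mem_singleton_iff]
        rw [hme]; exact hne'
    have hmj : m ≤ j := le_csSup hbddJ hmS
    have hmem : e m ∈ procSeq k Fe H0 m := (he m hm.1 hm.2).1
    show Finset.map f s' ∈ procSeq k Fe H0 s
    exact hme ▸ procSeq_mono k Fe H0 (by omega) hmem
  -- eD is present at step s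
  have hs1 : 1 ≤ s := by omega
  have hsetne : {t | eD ∈ procSeq k Fe H0 t}.Nonempty := by
    by_contra h
    rw [Set.not_nonempty_iff_eq_empty] at h
    have : s = 0 := by
      rw [hsDef, stepOf, h, Nat.sInf_empty]
    omega
  have heDs : eD ∈ procSeq k Fe H0 s := Nat.sInf_mem hsetne
  -- `e i` has cardinality k
  have hcardi : (e i).card = k := by
    obtain ⟨s', hs', hmap⟩ := heiEd
    rw [← hmap, Finset.card_map]
    exact hFe s' hs'.1
  -- `e i` is added at step s+1 by completing the copy
  obtain ⟨g, hg⟩ := heD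
  have hcreate : e i ∈ procSeq k Fe H0 (s + 1) := by
    show e i ∈ bootStep k Fe (procSeq k Fe H0 s)
    refine Set.mem_union_right _ ⟨hcardi, g, ?_, ?_⟩
    · intro t ht
      have : t.map g ∈ Ed ∪ {eD} := by
        rw [← hg]; exact Set.mem_image_of_mem _ ht
      rcases this with hEd' | hD
      · by_cases hcase : t.map g = e i
        · exact Set.mem_union_right _ (by simp [hcase])
        · exact Set.mem_union_left _ (hEdsub _ hEd' hcase)
      · rw [Set.mem_singleton_iff] at hD
        exact Set.mem_union_left _ (hD ▸ heDs)
    · have : e i ∈ (fun s => s.map g) '' Fe := by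
        rw [hg]; exact Set.mem_union_left _ heiEd
      obtain ⟨t, ht, hmap⟩ := this
      exact ⟨t, ht, hmap⟩
  -- `e i` is not present at step i - 1, so i ≤ s + 1
  have hnot : e i ∉ procSeq k Fe H0 (i - 1) := (he i hi1 hiτ).2
  have hle : i ≤ s + 1 := by
    by_contra h
    push_neg at h
    exact hnot (procSeq_mono k Fe H0 (by omega) hcreate)
  omega
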